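/- Assume p < 1 − β^α and 0 < ĉ < 1, and let c₀ = (1−p)(1−β^α)/((1−p)+(1−β^α)). If ĉ ≥ c₀ and Z₁* = (((1−p) + (β^{−α}−1)·ĉ)/(β^{−α}−p))^{−1/α}, Z₂* = ((1−p)(1−ĉ)/(β^{−α}−p))^{−1/α}, then β·Z₁* ≤ 1 ≤ β·Z₂* and β·Z₂* ≥ Z₁*. If ĉ ≤ c₀ and Z₁* = ((1−p−ĉ)·β^α/(1−p) + ĉ)^{−1/α}, Z₂* = ((1−p−ĉ)·β^α/(1−p))^{−1/α}, then β·Z₁* ≤ 1 ≤ β·Z₂* and β·Z₂* ≤ Z₁*. -/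

import Mathlib

open Set

set_option maxHeartbeats 1600000 in
/-- The optimal voucher interval `[Z₁*, Z₂*]` straddles `1/β`; moreover
`[βZ₁*, βZ₂*]` and `[Z₁*, Z₂*]` overlap exactly when `ĉ ≥ c₀`. -/
theorem optimal_interval_straddles (α β p c : ℝ) (hα : 0 < α)
    (hβ : β ∈ Ioo (0:ℝ) 1) (hp : p ∈ Ioo (0:ℝ) 1)
    (hpβ : p < 1 - β ^ α) (hc0 : 0 < c) (hc1 : c < 1) :
    ((1 - p) * (1 - β ^ α) / ((1 - p) + (1 - β ^ α)) ≤ c →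
      β * ((((1 - p) + (β ^ (-α) - 1) * c) / (β ^ (-α) - p)) ^ (-1 / α)) ≤ 1 ∧
      1 ≤ β * (((1 - p) * (1 - c) / (β ^ (-α) - p)) ^ (-1 / α)) ∧
      (((1 - p) + (β ^ (-α) - 1) * c) / (β ^ (-α) - p)) ^ (-1 / α)
        ≤ β * (((1 - p) * (1 - c) / (β ^ (-α) - p)) ^ (-1 / α))) ∧
    (c ≤ (1 - p) * (1 - β ^ α) / ((1 - p) + (1 - β ^ α)) →
      β * (((1 - p - c) * β ^ α / (1 - p) + c) ^ (-1 / α)) ≤ 1 ∧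
      1 ≤ β * (((1 - p - c) * β ^ α / (1 - p)) ^ (-1 / α)) ∧
      β * (((1 - p - c) * β ^ α / (1 - p)) ^ (-1 / α))
        ≤ ((1 - p - c) * β ^ α / (1 - p) + c) ^ (-1 / α)) := by
  obtain ⟨hβ0, hβ1⟩ := hβ
  obtain ⟨hp0, hp1⟩ := hp
  rw [Real.rpow_neg hβ0.le α]
  obtain ⟨b, hb⟩ : ∃ x : ℝ, β ^ α = x := ⟨_, rfl⟩
  rw [hb] at hpβ ⊢
  have hb0 : 0 < b := hb ▸ Real.rpow_pos_of_pos hβ0 α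
  have hb1 : b < 1 := hb ▸ Real.rpow_lt_one hβ0.le hβ1 hα
  have hβb : b ^ (1 / α) = β := by
    rw [← hb, ← Real.rpow_mul hβ0.le, mul_one_div_cancel hα.ne', Real.rpow_one]
  -- key: β * x^(-1/α) = (x/b)^(-1/α)
  have hmul : ∀ x : ℝ, 0 < x → β * x ^ (-1 / α) = (x / b) ^ (-1 / α) := by
    intro x hx
    rw [div_eq_mul_inv x b, Real.mul_rpow hx.le (by positivity),
      Real.inv_rpow hb0.le, show (-1/α) = -(1/α) by ring, Real.rpow_neg hb0.le,
      inv_inv, hβb, mul_comm]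
  have hneg : -1 / α < 0 := div_neg_of_neg_of_pos (by norm_num) hα
  have hkey : ∀ x y : ℝ, 0 < x → 0 < y → (x ^ (-1 / α) ≤ y ^ (-1 / α) ↔ y ≤ x) :=
    fun x y hx hy => Real.rpow_le_rpow_iff_of_neg hx hy hneg
  have hupb : p < 1 - b := hpβ
  constructor
  · intro hc
    have hD : 0 < b⁻¹ - p := by
      have : 1 < b⁻¹ := (one_lt_inv₀ hb0).mpr hb1
      linarith
    have hbi1 : 1 < b⁻¹ := (one_lt_inv₀ hb0).mpr hb1
    set X₁ : ℝ := ((1 - p) + (b⁻¹ - 1) * c) / (b⁻¹ - p) with hX₁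
    set X₂ : ℝ := (1 - p) * (1 - c) / (b⁻¹ - p) with hX₂
    have hX₁0 : 0 < X₁ := by
      apply div_pos _ hD; nlinarith
    have hX₂0 : 0 < X₂ := by
      apply div_pos _ hD; nlinarith
    -- hypothesis: (1-p)(1-b) ≤ c((1-p)+(1-b))
    have hc' : (1 - p) * (1 - b) ≤ c * ((1 - p) + (1 - b)) := by
      rw [div_le_iff₀ (by linarith)] at hc; linarith [hc]
    refine ⟨?_, ?_, ?_⟩
    · rw [hmul X₁ hX₁0]
      apply Real.rpow_le_one_of_one_le_of_nonpos _ hneg.le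
      rw [le_div_iff₀ hb0, hX₁, one_mul, le_div_iff₀ hD]
      have h1 : b * (b⁻¹ - p) = 1 - b * p := by
        field_simp
      -- need b ≤ X₁ i.e. b*(b⁻¹-p) ≤ (1-p)+(b⁻¹-1)c
      -- equivalent to p*b ≤ c ; we show p*b*(b⁻¹-1) ≤ (b⁻¹-1)c from p*b ≤ c
      have hpb : p * b ≤ c := by
        nlinarith [mul_pos hp0 hb0, hc', mul_pos (mul_pos hp0 hb0) (sub_pos.mpr hb1)]
      nlinarith [mul_le_mul_of_nonneg_left hpb (le_of_lt (sub_pos.mpr hbi1)),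
        mul_pos hD hD, h1]
    · rw [hmul X₂ hX₂0]
      apply Real.one_le_rpow_of_pos_of_le_one_of_nonpos (by positivity) _ hneg.le
      rw [div_le_one hb0, hX₂, div_le_iff₀ hD]
      have h1 : b * (b⁻¹ - p) = 1 - b * p := by field_simp
      -- need X₂ ≤ b : (1-p)(1-c) ≤ 1 - b p
      nlinarith [hc', h1, mul_pos hb0 hD]
    · rw [hmul X₂ hX₂0, hkey X₁ (X₂ / b) hX₁0 (by positivity),
        div_le_iff₀ hb0, hX₁, hX₂, div_mul_eq_mul_div,
        div_le_div_iff_of_pos_right hD]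
      -- need X₂ ≤ b X₁ : (1-p)(1-c) ≤ b(1-p) + (1-b)c
      have h3 : (1 - p + (b⁻¹ - 1) * c) * b = b * (1 - p) + (1 - b) * c := by
        field_simp
      rw [h3]; nlinarith [hc']
  · intro hc
    have hu : (0:ℝ) < 1 - p := by linarith
    have hv : (0:ℝ) < 1 - b := by linarith
    have hc0' : c < 1 - p := by
      have : (1 - p) * (1 - b) / ((1 - p) + (1 - b)) < 1 - p := by
        rw [div_lt_iff₀ (by linarith)]; nlinarith
      linarith
    have hpc : 0 < 1 - p - c := by linarith
    have hX₂0 : 0 < (1 - p - c) * b / (1 - p) := by positivity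
    have hX₁0 : 0 < (1 - p - c) * b / (1 - p) + c := by positivity
    have hc' : c * ((1 - p) + (1 - b)) ≤ (1 - p) * (1 - b) := by
      rw [le_div_iff₀ (by linarith)] at hc; linarith [hc]
    have hbX₁ : b ≤ (1 - p - c) * b / (1 - p) + c := by
      rw [div_add' _ _ _ hu.ne', le_div_iff₀ hu]
      clear hmul hkey hβb hb
      nlinarith [mul_nonneg hc0.le (by linarith : (0:ℝ) ≤ 1 - p - b)]
    have hX₂b' : (1 - p - c) * b / (1 - p) ≤ b := by
      rw [div_le_iff₀ hu]
      have h := mul_le_mul_of_nonneg_right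
        (show 1 - p - c ≤ 1 - p by linarith) hb0.le
      linarith
    have hthird : (1 - p - c) * b / (1 - p) + c ≤ ((1 - p - c) * b / (1 - p)) / b := by
      have h4 : ((1 - p - c) * b / (1 - p)) / b = (1 - p - c) / (1 - p) := by
        rw [div_div, mul_comm (1 - p) b, ← div_div, mul_div_assoc,
          div_self hb0.ne', mul_one]
      rw [h4, div_add' _ _ _ hu.ne', div_le_div_iff_of_pos_right hu]
      clear hmul hkey hβb hb
      nlinarith [hc']
    refine ⟨?_, ?_, ?_⟩
    · rw [hmul _ hX₁0]
      exact Real.rpow_le_one_of_one_le_of_nonpos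
        ((le_div_iff₀ hb0).mpr (by rwa [one_mul])) hneg.le
    · rw [hmul _ hX₂0]
      exact Real.one_le_rpow_of_pos_of_le_one_of_nonpos (by positivity)
        ((div_le_one hb0).mpr hX₂b') hneg.le
    · rw [hmul _ hX₂0, hkey _ _ (by positivity) hX₁0]
      exact hthird
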